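/- Let D be a finite digraph. If every missing edge of D is good, then D has a vertex v with the second neighborhood property, i.e. |N⁺(v)| ≤ |N⁺⁺(v)|. -/

import Mathlib

/-- First out-neighborhood of `v` in the digraph with arc relation `E`. -/
def Nplus {V : Type*} (E : V → V → Prop) (v : V) : Set V := {u | E v u}

/-- Second out-neighborhood: vertices at directed distance exactly 2 from `v`. -/
def Nplusplus {V : Type*} (E : V → V → Prop) (v : V) : Set V :=
  {u | u ∉ Nplus E v ∧ u ≠ v ∧ ∃ w ∈ Nplus E v, E w u}

/-- `v` has the second neighborhood property. -/
def HasSNP {V : Type*} (E : V → V → Prop) (v : V) : Prop :=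
  (Nplus E v).ncard ≤ (Nplusplus E v).ncard

/-- `{x, y}` is a missing edge of the digraph `E`. -/
def IsMissingEdge {V : Type*} (E : V → V → Prop) (x y : V) : Prop :=
  x ≠ y ∧ ¬ E x y ∧ ¬ E y x

/-- The ordered missing edge `(x₁, y₁)` loses to the ordered missing edge `(x₂, y₂)`. -/
def OLoses {V : Type*} (E : V → V → Prop) (x₁ y₁ x₂ y₂ : V) : Prop :=
  E x₁ x₂ ∧ y₂ ∉ Nplus E x₁ ∪ Nplusplus E x₁ ∧
  E y₁ y₂ ∧ x₂ ∉ Nplus E y₁ ∪ Nplusplus E y₁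

/-- The missing edge `{a, b}` loses to the missing edge `{c, d}`:
some ordering of the endpoints satisfies the ordered losing relation. -/
def Loses {V : Type*} (E : V → V → Prop) (a b c d : V) : Prop :=
  OLoses E a b c d ∨ OLoses E a b d c ∨ OLoses E b a c d ∨ OLoses E b a d c

/-- The missing edge `{a, b}` is good. -/
def Good {V : Type*} (E : V → V → Prop) (a b : V) : Prop :=
  (∀ v, v ≠ a → v ≠ b → E v a → b ∈ Nplus E v ∪ Nplusplus E v) ∨
  (∀ v, v ≠ a → v ≠ b → E v b → a ∈ Nplus E v ∪ Nplusplus E v)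

/-- Arc of the dependency digraph Δ: the missing edge `e` loses to the missing edge `f`. -/
def DeltaArc {V : Type*} (E : V → V → Prop) (e f : Sym2 V) : Prop :=
  ∃ a b c d : V, e = s(a, b) ∧ f = s(c, d) ∧
    IsMissingEdge E a b ∧ IsMissingEdge E c d ∧ OLoses E a b c d

open Classical

section auxlist
variable {V : Type*}

/-- classical count of elements of a list satisfying a predicate -/
noncomputable def cntP (p : V → Prop) (l : List V) : ℕ :=
  l.countP fun x => decide (p x)

lemma cntP_nil (p : V → Prop) : cntP p ([] : List V) = 0 := rfl

lemma cntP_cons (p : V → Prop) (a : V) (l : List V) :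
    cntP p (a :: l) = cntP p l + (if p a then 1 else 0) := by
  simp [cntP, List.countP_cons]

lemma cntP_append (p : V → Prop) (l₁ l₂ : List V) :
    cntP p (l₁ ++ l₂) = cntP p l₁ + cntP p l₂ := List.countP_append ..

lemma cntP_mono {p q : V → Prop} {l : List V} (h : ∀ x ∈ l, p x → q x) :
    cntP p l ≤ cntP q l := by
  induction l with
  | nil => simp [cntP_nil]
  | cons a t ih =>
    have h1 : cntP p t ≤ cntP q t := ih fun x hx => h x (List.mem_cons_of_mem a hx)
    have h2 : (if p a then 1 else 0) ≤ (if q a then 1 else 0) := by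
      by_cases hp : p a
      · simp [hp, h a List.mem_cons_self hp]
      · simp [hp]
    rw [cntP_cons, cntP_cons]
    omega

/-- weight of a list: number of "forward arcs" of T -/
noncomputable def wgt (T : V → V → Prop) : List V → ℕ
  | [] => 0
  | a :: s => cntP (T a) s + wgt T s

lemma wgt_cons (T : V → V → Prop) (a : V) (s : List V) :
    wgt T (a :: s) = cntP (T a) s + wgt T s := rfl

lemma wgt_exchange (T : V → V → Prop) :
    ∀ (A B : List V) (r : V) (C : List V),
      wgt T (A ++ (B ++ r :: C)) + cntP (T r) B
        = wgt T (A ++ r :: (B ++ C)) + cntP (fun x => T x r) B := by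
  intro A
  induction A with
  | cons a A' ih =>
    intro B r C
    have hcnt : cntP (T a) (A' ++ (B ++ r :: C)) = cntP (T a) (A' ++ r :: (B ++ C)) := by
      rw [cntP_append, cntP_append, cntP_append, cntP_cons, cntP_cons, cntP_append]
      ring
    have := ih B r C
    simp only [List.cons_append, wgt_cons]
    omega
  | nil =>
    intro B
    induction B with
    | nil => simp [cntP_nil]
    | cons b B' ihB =>
      intro r C
      have h1 := ihB r C
      simp only [List.nil_append, List.cons_append, wgt_cons, cntP_cons, cntP_append] at h1 ⊢
      linarith

/-- split a list at the first element satisfying P, if any -/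
lemma split_first (P : V → Prop) :
    ∀ s : List V, (∀ x ∈ s, ¬ P x) ∨
      ∃ c r s', s = c ++ r :: s' ∧ (∀ x ∈ c, ¬ P x) ∧ P r := by
  intro s
  induction s with
  | nil => exact Or.inl (by simp)
  | cons a t ih =>
    by_cases hp : P a
    · exact Or.inr ⟨[], a, t, by simp, by simp, hp⟩
    · rcases ih with h | ⟨c, r, s', rfl, hc, hr⟩
      · left; intro x hx
        rcases List.mem_cons.mp hx with rfl | hx
        · exact hp
        · exact h x hx
      · exact Or.inr ⟨a :: c, r, s', by simp, by
          intro x hx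
          rcases List.mem_cons.mp hx with rfl | hx
          · exact hp
          · exact hc x hx, hr⟩

lemma cntP_eq_ncard (m : List V) (hm : m.Nodup) (S : Set V) (p : V → Prop)
    (hp : ∀ x, p x ↔ x ∈ S) (hsub : ∀ x ∈ S, x ∈ m) :
    cntP p m = S.ncard := by
  have h1 : cntP p m = (m.filter fun x => decide (p x)).length := by
    rw [cntP, List.countP_eq_length_filter]
  have hnd : (m.filter fun x => decide (p x)).Nodup := hm.filter _
  have h2 : (m.filter fun x => decide (p x)).length
      = (m.filter fun x => decide (p x)).toFinset.card := by
    rw [List.toFinset_card_of_nodup hnd]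
  have h3 : S = ((m.filter fun x => decide (p x)).toFinset : Set V) := by
    ext x
    simp only [List.coe_toFinset, Set.mem_setOf_eq, List.mem_filter, decide_eq_true_eq]
    constructor
    · intro hx; exact ⟨hsub x hx, (hp x).mpr hx⟩
    · intro ⟨_, hx⟩; exact (hp x).mp hx
  rw [h1, h2, h3, Set.ncard_coe_finset]

end auxlist

/-- if every missing edge of a finite digraph is good, then the
digraph has a vertex with the second neighborhood property. -/
theorem snp_of_all_missing_edges_good {V : Type*} [Fintype V] [Nonempty V]
    (E : V → V → Prop)
    (hasym : ∀ x y : V, E x y → ¬ E y x)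
    (hgood : ∀ a b : V, IsMissingEdge E a b → Good E a b) :
    ∃ v : V, HasSNP E v := by
  classical
  obtain ⟨σ⟩ : Nonempty (V ≃ Fin (Fintype.card V)) := ⟨Fintype.equivFin V⟩
  have hirr : ∀ x : V, ¬ E x x := fun x h => hasym x x h h
  -- the "sees within two steps" predicate used for orienting missing edges
  set P : V → V → Prop := fun a b =>
    ∀ v, v ≠ a → v ≠ b → E v a → b ∈ Nplus E v ∪ Nplusplus E v with hPdef
  -- tournament completion
  set T : V → V → Prop := fun a b =>
    E a b ∨ (IsMissingEdge E a b ∧ P a b ∧ (P b a → σ a < σ b)) with hTdef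
  have hTE : ∀ a b, E a b → T a b := fun a b h => Or.inl h
  have hGoodP : ∀ a b, IsMissingEdge E a b → P a b ∨ P b a := by
    intro a b hm
    rcases hgood a b hm with h | h
    · exact Or.inl h
    · right; intro v hvb hva hE; exact h v hva hvb hE
  have htot : ∀ a b : V, a ≠ b → T a b ∨ T b a := by
    intro a b hab
    by_cases h1 : E a b
    · exact Or.inl (hTE a b h1)
    by_cases h2 : E b a
    · exact Or.inr (hTE b a h2)
    have hm : IsMissingEdge E a b := ⟨hab, h1, h2⟩
    have hm' : IsMissingEdge E b a := ⟨hab.symm, h2, h1⟩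
    have hσ : σ a < σ b ∨ σ b < σ a := by
      rcases lt_trichotomy (σ a) (σ b) with h | h | h
      · exact Or.inl h
      · exact absurd (σ.injective h) hab
      · exact Or.inr h
    rcases hGoodP a b hm with hp | hp
    · by_cases hq : P b a
      · rcases hσ with h | h
        · exact Or.inl (Or.inr ⟨hm, hp, fun _ => h⟩)
        · exact Or.inr (Or.inr ⟨hm', hq, fun _ => h⟩)
      · exact Or.inl (Or.inr ⟨hm, hp, fun hq' => absurd hq' hq⟩)
    · by_cases hq : P a b
      · rcases hσ with h | h
        · exact Or.inl (Or.inr ⟨hm, hq, fun _ => h⟩)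
        · exact Or.inr (Or.inr ⟨hm', hp, fun _ => h⟩)
      · exact Or.inr (Or.inr ⟨hm', hp, fun hq' => absurd hq' hq⟩)
  have haddP : ∀ a b, T a b → ¬ E a b → P a b := by
    intro a b h h1
    rcases h with h | h
    · exact absurd h h1
    · exact h.2.1
  -- median order
  set l₀ : List V := (Finset.univ : Finset V).toList with hl₀
  have hl₀mem : l₀ ∈ l₀.permutations := List.mem_permutations.mpr (List.Perm.refl _)
  have hne : l₀.permutations ≠ [] := List.ne_nil_of_mem hl₀mem
  obtain ⟨l, hlperm, hlmax⟩ : ∃ l, l ∈ l₀.permutations ∧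
      ∀ l' ∈ l₀.permutations, wgt T l' ≤ wgt T l := by
    cases h : List.argmax (wgt T) l₀.permutations with
    | none => exact absurd (List.argmax_eq_none.mp h) hne
    | some m =>
      have hm : m ∈ List.argmax (wgt T) l₀.permutations := h ▸ rfl
      exact ⟨m, List.argmax_mem hm, fun l' h' => List.le_of_mem_argmax h' hm⟩
  have hlp : List.Perm l l₀ := List.mem_permutations.mp hlperm
  have hmax : ∀ l', List.Perm l' l → wgt T l' ≤ wgt T l := fun l' h =>
    hlmax l' (List.mem_permutations.mpr (h.trans hlp))
  have hnodup : l.Nodup := hlp.nodup_iff.mpr (Finset.nodup_toList _)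
  have hall : ∀ v : V, v ∈ l := fun v => hlp.mem_iff.mpr (by simp [hl₀])
  obtain ⟨m, f, hlmf⟩ : ∃ m f, l = m ++ [f] := by
    rcases List.eq_nil_or_concat l with h | ⟨m, f, h⟩
    · obtain ⟨v⟩ := ‹Nonempty V›
      exact absurd (hall v) (by simp [h])
    · exact ⟨m, f, by simpa using h⟩
  -- predicates
  set Gp : V → Prop := fun x => E f x with hGp
  set GLp : V → Prop := fun u => u ≠ f ∧ ¬ E f u ∧
      ∃ b, E f b ∧ T b u ∧ ∃ Pl Ql, l = Pl ++ u :: Ql ∧ b ∈ Pl with hGLpdef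
  -- GL is contained in the second out-neighborhood of f
  have hGLB : ∀ u, GLp u → u ∈ Nplusplus E f := by
    intro u hu
    obtain ⟨huf, hnEfu, b, hEfb, hTbu, _⟩ := hu
    have hfb : f ≠ b := fun h => hirr f (h ▸ hEfb)
    have hfu : f ≠ u := Ne.symm huf
    by_cases hEbu : E b u
    · exact ⟨hnEfu, huf, b, hEfb, hEbu⟩
    · have hp : P b u := haddP b u hTbu hEbu
      have h2 := hp f hfb hfu hEfb
      rcases h2 with h | h
      · exact absurd h hnEfu
      · exact h
  -- exchange inequality from maximality of the median order
  have hexch : ∀ (A B : List V) (r : V) (C : List V), l = A ++ (B ++ r :: C) →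
      cntP (T r) B ≤ cntP (fun x => T x r) B := by
    intro A B r C hdec
    have hid := wgt_exchange T A B r C
    have hperm : List.Perm (A ++ r :: (B ++ C)) l := by
      rw [hdec]
      exact List.Perm.append_left A List.perm_middle.symm
    have hle := hmax _ hperm
    rw [← hdec] at hid
    omega
  -- main chunk induction
  have hmain : ∀ (n : ℕ) (s p : List V), s.length ≤ n → l = p ++ (s ++ [f]) →
      cntP Gp s ≤ cntP GLp s := by
    intro n
    induction n with
    | zero =>
      intro s p hlen _
      have hs : s = [] := List.length_eq_zero_iff.mp (Nat.le_zero.mp hlen)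
      subst hs; simp [cntP_nil]
    | succ n ih =>
      intro s p hlen hdec
      have hnd2 : (s ++ [f]).Nodup := List.Nodup.of_append_right (hdec ▸ hnodup)
      have hdisj := List.disjoint_of_nodup_append hnd2
      have hfs : ∀ x ∈ s, x ≠ f := fun x hx hxf => hdisj hx (by simp [hxf])
      rcases split_first (fun x => x ≠ f ∧ ¬ E f x ∧ ¬ GLp x) s with hno | ⟨c, r, s', hsplit, hcno, hbadr⟩
      · -- no bad vertex in s : use the feed property of f
        have hdec2 : l = p ++ (s ++ f :: []) := by simpa using hdec
        have hx := hexch p s f [] hdec2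
        have h1 : cntP Gp s ≤ cntP (T f) s := cntP_mono (fun x _ hg => hTE f x hg)
        have h2 : cntP (fun x => T x f) s ≤ cntP GLp s := by
          apply cntP_mono
          intro x hxs hTxf
          have hxf : x ≠ f := hfs x hxs
          have hnEfx : ¬ E f x := by
            intro hE
            rcases hTxf with h | h
            · exact hasym f x hE h
            · exact h.1.2.2 hE
          by_contra hGL
          exact hno x hxs ⟨hxf, hnEfx, hGL⟩
        omega
      · -- first bad vertex r, preceded by chunk c
        obtain ⟨hrf, hnEfr, hnGLr⟩ := hbadr
        have hlen' : s'.length ≤ n := by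
          rw [hsplit] at hlen
          simp [List.length_append] at hlen
          omega
        have hdec' : l = (p ++ (c ++ [r])) ++ (s' ++ [f]) := by
          rw [hdec, hsplit]; simp
        have ih' := ih s' (p ++ (c ++ [r])) hlen' hdec'
        have hdecx : l = p ++ (c ++ r :: (s' ++ [f])) := by
          rw [hdec, hsplit]; simp
        have hx := hexch p c r (s' ++ [f]) hdecx
        have hGLr_of : ∀ x ∈ c, E f x → T x r → False := by
          intro x hxc hEfx hTxr
          exact hnGLr ⟨hrf, hnEfr, x, hEfx, hTxr, p ++ c, s' ++ [f],
            by rw [hdecx]; simp, by simp [hxc]⟩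
        have h1 : cntP Gp c ≤ cntP (T r) c := by
          apply cntP_mono
          intro x hxc hEfx
          have hxr : x ≠ r := fun h => hnEfr (h ▸ hEfx)
          rcases htot x r hxr with h | h
          · exact absurd (hGLr_of x hxc hEfx h) (fun hh => hh)
          · exact h
        have h2 : cntP (fun x => T x r) c ≤ cntP GLp c := by
          apply cntP_mono
          intro x hxc hTxr
          have hxf : x ≠ f := hfs x (by rw [hsplit]; simp [hxc])
          have hnEfx : ¬ E f x := fun hE => hGLr_of x hxc hE hTxr
          by_contra hGL
          exact hcno x hxc ⟨hxf, hnEfx, hGL⟩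
        have hGr : ¬ Gp r := hnEfr
        rw [hsplit, cntP_append, cntP_append, cntP_cons, cntP_cons]
        simp only [hGr, hnGLr, if_false]
        omega
  -- final assembly
  have hm0 : l = [] ++ (m ++ [f]) := by simpa using hlmf
  have hcount := hmain m.length m [] le_rfl hm0
  have hmnd : m.Nodup := List.Nodup.of_append_left (hlmf ▸ hnodup)
  have hmemm : ∀ x : V, x ≠ f → x ∈ m := by
    intro x hx
    have hxl := hall x
    rw [hlmf] at hxl
    rcases List.mem_append.mp hxl with h | h
    · exact h
    · simp at h; exact absurd h hx
  have hG : cntP Gp m = (Nplus E f).ncard := by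
    apply cntP_eq_ncard m hmnd
    · intro x; exact Iff.rfl
    · intro x hx
      exact hmemm x (fun h => hirr f (h ▸ hx))
  have hB : cntP (fun u => u ∈ Nplusplus E f) m = (Nplusplus E f).ncard := by
    apply cntP_eq_ncard m hmnd
    · intro x; exact Iff.rfl
    · intro x hx
      exact hmemm x hx.2.1
  have hGLB' : cntP GLp m ≤ cntP (fun u => u ∈ Nplusplus E f) m :=
    cntP_mono (fun x _ h => hGLB x h)
  exact ⟨f, by unfold HasSNP; omega⟩
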